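/- Let κ ≥ 1 and η ≥ 0 be real numbers. For every real polynomial p of degree k with p(0) = 1, there exist a natural number m ≤ k and real numbers r₁, …, r_m ∈ [1/κ, 1 + η] such that for all x ∈ [1/κ, 1 + η], ∏_{i=1}^m |1 − x/r_i| ≤ |p(x)|. -/

import Mathlib

open Matrix Polynomial Set

/-- Euclidean norm of a vector in `ℝⁿ`. -/
noncomputable def vecNorm {n : ℕ} (v : Fin n → ℝ) : ℝ :=
  Real.sqrt (∑ i, v i ^ 2)

/-- Spectral (operator) norm of a real matrix. -/
noncomputable def matNorm {m n : ℕ} (A : Matrix (Fin m) (Fin n) ℝ) : ℝ :=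
  sSup {c : ℝ | ∃ v : Fin n → ℝ, vecNorm v ≤ 1 ∧ c = vecNorm (A.mulVec v)}

/-- Largest eigenvalue of a square real matrix. -/
noncomputable def lmax {n : ℕ} (A : Matrix (Fin n) (Fin n) ℝ) : ℝ :=
  sSup {μ : ℝ | ∃ v : Fin n → ℝ, v ≠ 0 ∧ A.mulVec v = μ • v}

/-- Smallest eigenvalue of a square real matrix. -/
noncomputable def lmin {n : ℕ} (A : Matrix (Fin n) (Fin n) ℝ) : ℝ :=
  sInf {μ : ℝ | ∃ v : Fin n → ℝ, v ≠ 0 ∧ A.mulVec v = μ • v}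

/-- A matrix is tridiagonal if `T i j = 0` whenever `|i - j| > 1`. -/
def IsTridiagonal {k : ℕ} (T : Matrix (Fin k) (Fin k) ℝ) : Prop :=
  ∀ i j : Fin k, 1 < |(i : ℤ) - (j : ℤ)| → T i j = 0

/-- The matrix function `f(A)` of a real symmetric matrix, defined through the
eigendecomposition `A = V Λ Vᵀ` as `V f(Λ) Vᵀ`. -/
noncomputable def matFun {n : ℕ} {A : Matrix (Fin n) (Fin n) ℝ} (hA : A.IsHermitian)
    (f : ℝ → ℝ) : Matrix (Fin n) (Fin n) ℝ :=
  (hA.eigenvectorUnitary : Matrix (Fin n) (Fin n) ℝ) * Matrix.diagonal (f ∘ hA.eigenvalues) *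
    star (hA.eigenvectorUnitary : Matrix (Fin n) (Fin n) ℝ)

/-- The `i`-th Chebyshev polynomial of the first kind, shifted and stretched to the range
`[lmin A - η, lmax A + η]`: with `r_max = lmax A + η`, `r_min = lmin A - η` and
`δ = 2 / (r_max - r_min)`, this is `y ↦ T_i (δ (y - r_min) - 1)`. -/
noncomputable def shiftedCheb {n : ℕ} (A : Matrix (Fin n) (Fin n) ℝ) (η : ℝ) (i : ℕ) :
    Polynomial ℝ :=
  (Polynomial.Chebyshev.T ℝ i).comp
    (Polynomial.C (2 / ((lmax A + η) - (lmin A - η))) *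
      (Polynomial.X - Polynomial.C (lmin A - η)) - 1)

private lemma clampAbs_le {κ η s x : ℝ} (hκ : 1 ≤ κ) (hη : 0 ≤ η) (hs : 0 < s)
    (hx : x ∈ Set.Icc (1/κ) (1+η)) :
    |1 - x / max (1/κ) (min s (1+η))| ≤ |1 - x / s| := by
  have hκ0 : 0 < κ := lt_of_lt_of_le one_pos hκ
  have hlo : 0 < 1/κ := by positivity
  have hlohi : 1/κ ≤ 1 + η := le_trans (by rw [div_le_one hκ0]; linarith) (by linarith)
  obtain ⟨hx1, hx2⟩ := hx
  have hx0 : 0 < x := lt_of_lt_of_le hlo hx1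
  rcases lt_or_ge s (1/κ) with h1 | h1
  · have hmin : min s (1+η) = s := min_eq_left (le_trans h1.le hlohi)
    have hmax : max (1/κ) (min s (1+η)) = 1/κ := by rw [hmin]; exact max_eq_left h1.le
    rw [hmax]
    have h2 : 1 ≤ x / (1/κ) := (one_le_div hlo).mpr hx1
    have h3 : x / (1/κ) ≤ x / s := div_le_div_of_nonneg_left hx0.le hs h1.le
    rw [abs_of_nonpos (by linarith), abs_of_nonpos (by linarith)]
    linarith
  · rcases le_or_gt s (1+η) with h2 | h2
    · rw [min_eq_left h2, max_eq_right h1]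
    · have hmin : min s (1+η) = 1+η := min_eq_right h2.le
      have hmax : max (1/κ) (min s (1+η)) = 1+η := by rw [hmin]; exact max_eq_right hlohi
      rw [hmax]
      have hhi : (0:ℝ) < 1+η := by linarith
      have h3 : x / s ≤ x / (1+η) := div_le_div_of_nonneg_left hx0.le hhi h2.le
      have h4 : x / (1+η) ≤ 1 := by rw [div_le_one hhi]; exact hx2
      rw [abs_of_nonneg (by linarith), abs_of_nonneg (by linarith)]
      linarith

private lemma multiset_prod_le_prod {α : Type*} (f g : α → ℝ) (s : Multiset α)
    (h : ∀ a ∈ s, 0 ≤ g a ∧ g a ≤ f a) :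
    (s.map g).prod ≤ (s.map f).prod := by
  induction s using Multiset.induction with
  | empty => simp
  | cons a s ih =>
    simp only [Multiset.map_cons, Multiset.prod_cons]
    have h1 := h a (Multiset.mem_cons_self a s)
    have h2 : ∀ b ∈ s, 0 ≤ g b ∧ g b ≤ f b := fun b hb => h b (Multiset.mem_cons_of_mem hb)
    have hg : 0 ≤ (Multiset.map g s).prod := Multiset.prod_nonneg (by
      intro y hy; obtain ⟨b, hb, rfl⟩ := Multiset.mem_map.mp hy; exact (h2 b hb).1)
    exact mul_le_mul h1.2 (ih h2) hg (le_trans h1.1 h1.2)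

private lemma root_factor_le {κ η x : ℝ} (hκ : 1 ≤ κ) (hη : 0 ≤ η)
    (hx : x ∈ Set.Icc (1/κ) (1+η)) (z : ℂ) (hz : z ≠ 0) :
    (if 0 < z.re then |1 - x / max (1/κ) (min (‖z‖) (1+η))| else 1)
      ≤ ‖(↑x - z)‖ / ‖z‖ := by
  have hκ0 : 0 < κ := lt_of_lt_of_le one_pos hκ
  have hx0 : 0 < x := lt_of_lt_of_le (by positivity) hx.1
  set ρ := ‖z‖ with hρdef
  have hρ : 0 < ρ := norm_pos_iff.mpr hz
  have habs : ‖(↑x - z)‖ ^ 2 = (x - z.re)^2 + z.im^2 := by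
    rw [Complex.sq_norm, Complex.normSq_apply]
    simp [Complex.sub_re, Complex.sub_im]
    ring
  have hρ2 : ρ ^ 2 = z.re^2 + z.im^2 := by
    rw [hρdef, Complex.sq_norm, Complex.normSq_apply]; ring
  split_ifs with hre
  · have ha : z.re ≤ ρ := le_trans (le_abs_self _) (Complex.abs_re_le_norm z)
    have hsq : (x - ρ)^2 ≤ ‖(↑x - z)‖ ^ 2 := by nlinarith
    have h1 : |x - ρ| ≤ ‖(↑x - z)‖ := by
      have := Real.sqrt_le_sqrt hsq
      rwa [Real.sqrt_sq_eq_abs, Real.sqrt_sq (norm_nonneg _)] at this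
    have h2 : |1 - x / ρ| = |x - ρ| / ρ := by
      rw [abs_sub_comm x ρ, show (1:ℝ) - x/ρ = (ρ - x)/ρ by field_simp, abs_div,
        abs_of_pos hρ]
    calc |1 - x / max (1/κ) (min ρ (1+η))| ≤ |1 - x / ρ| := clampAbs_le hκ hη hρ hx
      _ = |x - ρ| / ρ := h2
      _ ≤ ‖(↑x - z)‖ / ρ := by gcongr
  · push_neg at hre
    rw [le_div_iff₀ hρ, one_mul]
    have hsq : ρ^2 ≤ ‖(↑x - z)‖ ^ 2 := by nlinarith
    have := Real.sqrt_le_sqrt hsq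
    rwa [Real.sqrt_sq hρ.le, Real.sqrt_sq (norm_nonneg _)] at this

/-- Any polynomial of degree `k` with `p(0) = 1` is lower bounded in absolute
value on `[1/κ, 1 + η]` by a product `∏ |1 - x/rᵢ|` over at most `k` roots
`rᵢ ∈ [1/κ, 1 + η]`. -/
theorem polynomial_dominates_real_rooted_in_range
    (κ η : ℝ) (hκ : 1 ≤ κ) (hη : 0 ≤ η)
    (k : ℕ) (p : Polynomial ℝ) (hdeg : p.natDegree = k) (hp0 : p.eval 0 = 1) :
    ∃ m : ℕ, m ≤ k ∧ ∃ r : Fin m → ℝ,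
      (∀ i, r i ∈ Set.Icc (1 / κ) (1 + η)) ∧
      ∀ x ∈ Set.Icc (1 / κ) (1 + η), (∏ i, |1 - x / r i|) ≤ |p.eval x| := by
  have hκ0 : 0 < κ := lt_of_lt_of_le one_pos hκ
  have hlohi : 1/κ ≤ 1 + η := le_trans (by rw [div_le_one hκ0]; linarith) (by linarith)
  set P : Polynomial ℂ := p.map (algebraMap ℝ ℂ) with hPdef
  have hPev : ∀ a : ℝ, P.eval (a : ℂ) = ((p.eval a : ℝ) : ℂ) := by
    intro a
    have ha : ((a:ℂ)) = algebraMap ℝ ℂ a := rfl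
    rw [hPdef, eval_map, ha, eval₂_at_apply]
    rfl
  have hP0 : P.eval 0 = 1 := by
    rw [show ((0:ℂ)) = ((0:ℝ):ℂ) by norm_num, hPev, hp0]; norm_num
  set R := P.roots with hRdef
  have hzne : ∀ z ∈ R, z ≠ 0 := by
    intro z hz h0
    have := isRoot_of_mem_roots hz
    rw [h0] at this
    rw [IsRoot.def] at this
    rw [this] at hP0
    exact one_ne_zero hP0.symm
  have hsplit : P.Splits := IsAlgClosed.splits P
  have hfac := hsplit.eq_prod_roots
  have heval : ∀ a : ℂ, ‖(P.eval a)‖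
      = ‖P.leadingCoeff‖ * (R.map (fun z => ‖(a - z)‖)).prod := by
    intro a
    conv_lhs => rw [hfac]
    rw [eval_mul, eval_C, norm_mul, eval_multiset_prod, Multiset.map_map,
      (by intro s; exact map_multiset_prod (normHom : ℂ →*₀ ℝ) s : ∀ s : Multiset ℂ, ‖s.prod‖ = (s.map (‖·‖)).prod), Multiset.map_map]
    congr 1
    congr 1
    apply Multiset.map_congr rfl
    intro z _
    simp
  have h1 : ‖P.leadingCoeff‖ * (R.map (fun z => ‖z‖)).prod = 1 := by
    have := heval 0
    rw [hP0] at this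
    simp only [zero_sub, norm_neg] at this
    rw [norm_one] at this
    exact this.symm
  -- the multiset of clamped moduli of roots with positive real part
  set S : Multiset ℝ := (R.filter (fun z => 0 < z.re)).map
      (fun z => max (1/κ) (min (‖z‖) (1+η))) with hSdef
  set L : List ℝ := S.toList with hLdef
  refine ⟨L.length, ?_, fun i => L.get i, ?_, ?_⟩
  · have h2 : L.length = Multiset.card S := Multiset.length_toList S
    have h3 : Multiset.card S ≤ Multiset.card R := by
      rw [hSdef, Multiset.card_map]
      exact Multiset.card_le_card (Multiset.filter_le _ _)
    have h4 : Multiset.card R ≤ P.natDegree := P.card_roots'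
    calc L.length = Multiset.card S := h2
      _ ≤ Multiset.card R := h3
      _ ≤ P.natDegree := h4
      _ ≤ p.natDegree := natDegree_map_le
      _ = k := hdeg
  · intro i
    have hmem : L.get i ∈ S := by rw [← Multiset.mem_toList]; exact L.get_mem i
    rw [hSdef] at hmem
    obtain ⟨z, _, hzeq⟩ := Multiset.mem_map.mp hmem
    show L.get i ∈ Set.Icc (1/κ) (1+η)
    rw [← hzeq]
    exact ⟨le_max_left _ _, max_le hlohi (min_le_right _ _)⟩
  · intro x hx
    have hx0 : 0 < x := lt_of_lt_of_le (by positivity) hx.1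
    -- g z : lower bound per root; f z : actual factor per root
    set g : ℂ → ℝ := fun z =>
      if 0 < z.re then |1 - x / max (1/κ) (min (‖z‖) (1+η))| else 1 with hgdef
    set f : ℂ → ℝ := fun z => ‖(↑x - z)‖ / ‖z‖ with hfdef
    have step1 : (∏ i, |1 - x / L.get i|) = (S.map (fun ρ => |1 - x / ρ|)).prod := by
      have h := Fin.prod_univ_fun_getElem L (fun ρ => |1 - x / ρ|)
      simp only [List.get_eq_getElem]
      rw [h, ← Multiset.prod_coe, ← Multiset.map_coe, hLdef, Multiset.coe_toList]
    have step2 : (S.map (fun ρ => |1 - x / ρ|)).prod = (R.map g).prod := by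
      conv_rhs => rw [← Multiset.filter_add_not (fun z => 0 < z.re) R]
      rw [Multiset.map_add, Multiset.prod_add, hSdef, Multiset.map_map]
      have e1 : ((R.filter (fun z => 0 < z.re)).map
          ((fun ρ => |1 - x / ρ|) ∘ fun z => max (1/κ) (min (‖z‖) (1+η)))).prod
          = ((R.filter (fun z => 0 < z.re)).map g).prod := by
        congr 1
        apply Multiset.map_congr rfl
        intro z hz
        have := (Multiset.mem_filter.mp hz).2
        simp only [Function.comp, hgdef, if_pos this]
      have e2 : ((R.filter (fun z => ¬ 0 < z.re)).map g).prod = 1 := by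
        apply Multiset.prod_eq_one
        intro y hy
        obtain ⟨z, hz, rfl⟩ := Multiset.mem_map.mp hy
        have := (Multiset.mem_filter.mp hz).2
        simp only [hgdef, if_neg this]
      rw [e1, e2, mul_one]
    have step3 : (R.map g).prod ≤ (R.map f).prod := by
      apply multiset_prod_le_prod
      intro z hz
      constructor
      · simp only [hgdef]; split_ifs; exacts [abs_nonneg _, zero_le_one]
      · exact root_factor_le hκ hη hx z (hzne z hz)
    have step4 : (R.map f).prod = |p.eval x| := by
      have hx' : |p.eval x| = ‖(P.eval (x:ℂ))‖ := by
        rw [hPev, Complex.norm_real, Real.norm_eq_abs]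
      rw [hx', heval (x:ℂ)]
      simp only [hfdef, div_eq_mul_inv]
      rw [Multiset.prod_map_mul, Multiset.prod_map_inv]
      have hc : ‖P.leadingCoeff‖ = ((R.map (fun z => ‖z‖)).prod)⁻¹ :=
        eq_inv_of_mul_eq_one_left h1
      rw [hc]
      ring
    rw [step1, step2, ← step4]
    exact step3
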